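/- For any α, α†, β, β†, γ, γ† in F, the linear map D : L → L ⊗ L defined on basis elements by D(L_n) = (nα+γ) M_0 ⊗ M_n + (nα†+γ†) M_n ⊗ M_0, D(Y_{n−1/2}) = β M_0 ⊗ Y_{n−1/2} + β† Y_{n−1/2} ⊗ M_0, D(M_n) = 2(β M_0 ⊗ M_n + β† M_n ⊗ M_0), is a derivation from L to the L-module L ⊗ L under the adjoint diagonal action; that is, D([x,y]) = x·D(y) − y·D(x) for all x, y ∈ L. -/

import Mathlib

open TensorProduct

/-- Index set for the basis of the Schrödinger–Virasoro algebra: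
`Sum.inl n ↔ L_n`, `Sum.inr (Sum.inl n) ↔ Y_{n+1/2}`, `Sum.inr (Sum.inr n) ↔ M_n`. -/
abbrev SVIx : Type := ℤ ⊕ ℤ ⊕ ℤ

variable (F : Type) [Field F] [CharZero F]

/-- Underlying space of the Schrödinger–Virasoro algebra: the free `F`-module on `SVIx`. -/
abbrev SVL := SVIx →₀ F

noncomputable def Lb (n : ℤ) : SVL F := Finsupp.single (Sum.inl n) 1
noncomputable def Yb (n : ℤ) : SVL F := Finsupp.single (Sum.inr (Sum.inl n)) 1
noncomputable def Mb (n : ℤ) : SVL F := Finsupp.single (Sum.inr (Sum.inr n)) 1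

/-- The bracket of basis vectors.  Here `Yb n` stands for `Y_{n+1/2}`, so
`[L_m, Y_{n+1/2}] = ((n+1/2) - m/2) Y_{m+n+1/2}` and
`[Y_{a+1/2}, Y_{b+1/2}] = (b-a) M_{a+b+1}`; all other brackets vanish. -/
noncomputable def brIx : SVIx → SVIx → SVL F
  | Sum.inl m, Sum.inl n => ((n - m : ℤ) : F) • Lb F (m + n)
  | Sum.inl m, Sum.inr (Sum.inl n) => (((2*n + 1 - m : ℤ) : F) / 2) • Yb F (m + n)
  | Sum.inl m, Sum.inr (Sum.inr n) => ((n : ℤ) : F) • Mb F (m + n)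
  | Sum.inr (Sum.inl n), Sum.inl m => -((((2*n + 1 - m : ℤ) : F) / 2) • Yb F (m + n))
  | Sum.inr (Sum.inl a), Sum.inr (Sum.inl b) => ((b - a : ℤ) : F) • Mb F (a + b + 1)
  | Sum.inr (Sum.inr n), Sum.inl m => -(((n : ℤ) : F) • Mb F (m + n))
  | _, _ => 0

/-- The bracket of the Schrödinger–Virasoro algebra: the bilinear extension of `brIx`. -/
noncomputable def bk : SVL F →ₗ[F] SVL F →ₗ[F] SVL F :=
  Finsupp.lsum F fun i => LinearMap.toSpanSingleton F (SVL F →ₗ[F] SVL F)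
    (Finsupp.lsum F fun j => LinearMap.toSpanSingleton F (SVL F) (brIx F i j))

abbrev VV := SVL F ⊗[F] SVL F

noncomputable instance : AddCommGroup (VV F) := inferInstance

noncomputable instance : Zero (VV F) :=
  (inferInstanceAs (AddCommMonoid (VV F)) : AddCommMonoid (VV F)).toAddMonoid.toZero

/-- The adjoint diagonal action of `L` on `L ⊗ L`, as a bilinear map:
`x · (a ⊗ b) = [x,a] ⊗ b + a ⊗ [x,b]`. -/
noncomputable def adVb : SVL F →ₗ[F] VV F →ₗ[F] VV F :=
  ((LinearMap.rTensorHom (SVL F) : (SVL F →ₗ[F] SVL F) →ₗ[F] (VV F →ₗ[F] VV F)) ∘ₗ bk F)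
    + ((LinearMap.lTensorHom (SVL F) : (SVL F →ₗ[F] SVL F) →ₗ[F] (VV F →ₗ[F] VV F)) ∘ₗ bk F)

/-- The twist map `τ(x ⊗ y) = y ⊗ x`. -/
noncomputable def tau : VV F →ₗ[F] VV F := (TensorProduct.comm F (SVL F) (SVL F)).toLinearMap

/-- The map `1 - τ`. -/
noncomputable def oneMinusTau : VV F →ₗ[F] VV F where
  toFun v := v - tau F v
  map_add' x y := by
    simp only [map_add]; exact sub_add_sub_comm x (tau F x) y (tau F y) ▸ rfl
  map_smul' c x := by simp only [map_smul, RingHom.id_apply, smul_sub]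

/-- `Im (1 - τ) ⊂ L ⊗ L`. -/
noncomputable def skewIm : Submodule F (VV F) := LinearMap.range (oneMinusTau F)
/-- Values on basis elements of the special derivations `D` with parameters
`(α, α†, β, β†, γ, γ†)`:  `D(L_n) = (nα+γ) M₀⊗M_n + (nα†+γ†) M_n⊗M₀`,
`D(Y_{n+1/2}) = β M₀⊗Y_{n+1/2} + β† Y_{n+1/2}⊗M₀`, `D(M_n) = 2(β M₀⊗M_n + β† M_n⊗M₀)`. -/
noncomputable def dval (a a' b b' c c' : F) : SVIx → VV F
  | Sum.inl n => (((n : ℤ) : F) * a + c) • (Mb F 0 ⊗ₜ[F] Mb F n)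
      + (((n : ℤ) : F) * a' + c') • (Mb F n ⊗ₜ[F] Mb F 0)
  | Sum.inr (Sum.inl n) => b • (Mb F 0 ⊗ₜ[F] Yb F n) + b' • (Yb F n ⊗ₜ[F] Mb F 0)
  | Sum.inr (Sum.inr n) => (2 * b) • (Mb F 0 ⊗ₜ[F] Mb F n) + (2 * b') • (Mb F n ⊗ₜ[F] Mb F 0)

/-- The special derivation with parameters `(α, α†, β, β†, γ, γ†)`. -/
noncomputable def Dmap (a a' b b' c c' : F) : SVL F →ₗ[F] VV F :=
  Finsupp.lsum F fun i => LinearMap.toSpanSingleton F (VV F) (dval F a a' b b' c c' i)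

/-- `D` is a derivation from `L` to the `L`-module `L ⊗ L`. -/
def IsDer (D : SVL F →ₗ[F] VV F) : Prop :=
  ∀ x y : SVL F, D (bk F x y) = adVb F x (D y) - adVb F y (D x)


section Aux
set_option linter.unusedSectionVars false
variable {F : Type} [Field F] [CharZero F]

lemma bk_single (i j : SVIx) :
    bk F (Finsupp.single i 1) (Finsupp.single j 1) = brIx F i j := by
  simp [bk]

lemma Dmap_single (a a' b b' c c' : F) (k : SVIx) :
    Dmap F a a' b b' c c' (Finsupp.single k 1) = dval F a a' b b' c c' k := by
  simp [Dmap]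

lemma adVb_tmul (x u v : SVL F) :
    adVb F x (u ⊗ₜ[F] v) = bk F x u ⊗ₜ[F] v + u ⊗ₜ[F] bk F x v := by
  simp [adVb, LinearMap.rTensorHom, LinearMap.lTensorHom]

set_option maxHeartbeats 1000000 in
lemma key (a a' b b' c c' : F) (i j : SVIx) :
    Dmap F a a' b b' c c' (bk F (Finsupp.single i 1) (Finsupp.single j 1)) =
      adVb F (Finsupp.single i 1) (Dmap F a a' b b' c c' (Finsupp.single j 1))
        - adVb F (Finsupp.single j 1) (Dmap F a a' b b' c c' (Finsupp.single i 1)) := by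
  rcases i with m | m | m <;> rcases j with n | n | n <;>
    simp only [bk_single, Dmap_single, brIx, dval, map_zero, Lb, Yb, Mb, map_smul, map_neg, map_add,
      Dmap_single, adVb_tmul, bk_single, smul_add, neg_smul,
      ← TensorProduct.smul_tmul', TensorProduct.tmul_smul, smul_smul,
      zero_mul, mul_zero, zero_smul, TensorProduct.zero_tmul, TensorProduct.tmul_zero,
      add_zero, zero_add, smul_zero, neg_zero, sub_zero, zero_sub, add_comm] <;>
    push_cast <;>
    first
      | rfl
      | (match_scalars <;> ring)

end Aux

/-- Each member of the six-parameter family `Dmap` is a derivation from `L` to `L ⊗ L`. -/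
theorem sv_Dmap_isDer :
    ∀ a a' b b' c c' : F, IsDer F (Dmap F a a' b b' c c') := by
  intro a a' b b' c c' x y
  induction x using Finsupp.induction_linear with
  | zero => simp
  | add f g hf hg =>
      simp only [map_add, LinearMap.add_apply, hf, hg]
      abel
  | single i r =>
    induction y using Finsupp.induction_linear with
    | zero => simp
    | add f g hf hg =>
        simp only [map_add, LinearMap.add_apply, hf, hg]
        abel
    | single j s =>
        rw [show (Finsupp.single i r : SVL F) = r • Finsupp.single i 1 by
              simp [Finsupp.smul_single],
            show (Finsupp.single j s : SVL F) = s • Finsupp.single j 1 by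
              simp [Finsupp.smul_single]]
        simp only [map_smul, LinearMap.smul_apply, LinearMap.map_smul]
        rw [key a a' b b' c c' i j]
        module
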